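/- Every graph G on n ≥ 3 vertices in which every pair of nonadjacent vertices u, v satisfies d(u) + d(v) ≥ n is Hamiltonian. -/

import Mathlib

open SimpleGraph

/-- The number of components of `G − S`. -/
noncomputable def numComp {V : Type*} (G : SimpleGraph V) (S : Set V) : ℕ :=
  Nat.card ((G.induce Sᶜ).ConnectedComponent)

/-- `G` is `t`-tough: `|S| ≥ t · c(G − S)` for every `S` with `c(G − S) ≥ 2`. -/
def Tough {V : Type*} [Fintype V] (t : ℝ) (G : SimpleGraph V) : Prop :=
  ∀ S : Finset V, 2 ≤ numComp G ↑S → t * (numComp G ↑S : ℝ) ≤ (S.card : ℝ)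

/-- The degree of a vertex. -/
noncomputable def deg {V : Type*} [Fintype V] (G : SimpleGraph V) (v : V) : ℕ :=
  Nat.card (G.neighborSet v)

namespace OreAux

variable {V : Type*} [DecidableEq V]

/-- Build a walk from a chain of adjacencies. -/
def mkWalk (G : SimpleGraph V) : ∀ (u : V) (l : List V) (v : V),
    List.Chain G.Adj u (l ++ [v]) → G.Walk u v
  | _, [], _, h => Walk.cons (List.chain_cons.mp h).1 Walk.nil
  | u, a :: l, v, h =>
      Walk.cons (List.chain_cons.mp h).1 (mkWalk G a l v (List.chain_cons.mp h).2)

lemma mkWalk_support (G : SimpleGraph V) : ∀ (u : V) (l : List V) (v : V)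
    (h : List.Chain G.Adj u (l ++ [v])), (mkWalk G u l v h).support = u :: (l ++ [v])
  | _, [], _, _ => rfl
  | u, a :: l, v, h => by
      simp [mkWalk, mkWalk_support G a l v (List.chain_cons.mp h).2]

lemma end_edge_not_mem {G : SimpleGraph V} {a c : V} (p : G.Walk a c)
    (hnd : p.support.Nodup) (hlen : 2 ≤ p.length) : s(c, a) ∉ p.edges := by
  cases p with
  | nil => simp at hlen
  | @cons _ a₂ _ h q =>
    intro hmem
    rw [Walk.edges_cons, List.mem_cons] at hmem
    rw [Walk.support_cons, List.nodup_cons] at hnd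
    rcases hmem with he | he
    · rw [Sym2.eq_iff] at he
      rcases he with ⟨h1, h2⟩ | ⟨h1, h2⟩
      · exact hnd.1 (h1 ▸ q.end_mem_support)
      · subst h1
        cases q with
        | nil => simp at hlen
        | @cons _ b₂ _ h' q' =>
          have h2' := hnd.2
          rw [Walk.support_cons, List.nodup_cons] at h2'
          exact h2'.1 q'.end_mem_support
    · exact hnd.1 (Walk.fst_mem_support_of_mem_edges q (by rwa [Sym2.eq_swap] at he))

/-- A cyclic list representation of a Hamiltonian cycle. -/
def HamList (G : SimpleGraph V) (u : V) (l : List V) : Prop :=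
  (u :: l).Nodup ∧ (∀ w, w ∈ u :: l) ∧ 2 ≤ l.length ∧ List.Chain G.Adj u (l ++ [u])

lemma HamList.isHamiltonian [Fintype V] {G : SimpleGraph V} {u : V} {l : List V}
    (h : HamList G u l) : G.IsHamiltonian := by
  obtain ⟨hnd, hall, hlen, hch⟩ := h
  intro _
  obtain ⟨b, l', rfl⟩ : ∃ b l', l = b :: l' := by
    cases l with
    | nil => simp at hlen
    | cons b l' => exact ⟨b, l', rfl⟩
  rw [List.cons_append] at hch
  obtain ⟨hub, hch⟩ := List.chain_cons.mp hch
  have hperm : (b :: (l' ++ [u])).Perm (u :: b :: l') := List.perm_append_singleton u (b :: l')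
  have hnd' : (b :: (l' ++ [u])).Nodup := hperm.nodup_iff.mpr hnd
  set p := mkWalk G b l' u hch with hp
  have hps : p.support = b :: (l' ++ [u]) := mkWalk_support ..
  have hpath : p.IsPath := Walk.IsPath.mk' (by rw [hps]; exact hnd')
  have hedge : s(u, b) ∉ p.edges := by
    refine end_edge_not_mem p (by rw [hps]; exact hnd') ?_
    have hsl := p.length_support
    rw [hps] at hsl
    simp only [List.length_cons, List.length_append, List.length_singleton] at hsl
    simp only [List.length_cons] at hlen
    omega
  refine ⟨u, Walk.cons hub p, ?_⟩
  rw [Walk.isHamiltonianCycle_iff_isCycle_and_support_count_tail_eq_one]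
  constructor
  · exact (Walk.cons_isCycle_iff p hub).mpr ⟨hpath, hedge⟩
  · intro a
    rw [Walk.support_cons, List.tail_cons, hps]
    exact List.count_eq_one_of_mem hnd' (hperm.mem_iff.mpr (hall a))

lemma hamList_of_isHamiltonianCycle [Fintype V] {G : SimpleGraph V} {a : V}
    {c : G.Walk a a} (hc : c.IsHamiltonianCycle) (hn : 3 ≤ Fintype.card V) :
    ∃ u l, HamList G u l := by
  have htn : c.support.tail.Nodup := hc.isCycle.support_nodup
  have hlent : c.support.tail.length = Fintype.card V := by
    have h1 := hc.length_eq
    have h2 := c.length_support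
    have h3 : c.support.tail.length = c.support.length - 1 := by
      simp [List.length_tail]
    omega
  have htne : c.support.tail ≠ [] := by
    intro h; rw [h] at hlent; simp at hlent; omega
  have hgl : c.support.tail.getLast htne = a := by
    rw [List.getLast_tail]
    exact c.getLast_support
  obtain ⟨l', hl'⟩ : ∃ l', c.support.tail = l' ++ [a] := by
    refine ⟨c.support.tail.dropLast, ?_⟩
    conv_lhs => rw [← List.dropLast_append_getLast htne]
    rw [hgl]
  have hch : List.Chain G.Adj a (l' ++ [a]) := by
    have h1 := c.isChain_adj_support
    rw [c.support_eq_cons, hl'] at h1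
    exact h1
  have hndal : (a :: l').Nodup := by
    have := (List.perm_append_singleton a l').nodup_iff.mp (hl' ▸ htn)
    exact this
  refine ⟨a, l', hndal, ?_, ?_, hch⟩
  · intro w
    have hw : w ∈ c.support := hc.mem_support w
    rw [c.support_eq_cons, hl'] at hw
    simp only [List.mem_cons, List.mem_append, List.mem_singleton] at hw ⊢
    tauto
  · have : (l' ++ [a]).length = Fintype.card V := by rw [← hl']; exact hlent
    simp only [List.length_append, List.length_singleton] at this
    omega

lemma chain_of_complete {R : V → V → Prop} (hR : ∀ a b : V, a ≠ b → R a b) :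
    ∀ (l : List V) (u v : V), v ∉ u :: l → (u :: l).Nodup → List.Chain R u (l ++ [v])
  | [], u, v, hv, _ => by
      simp only [List.nil_append]
      exact List.Chain.cons (hR u v (by simp at hv; exact fun h => hv h.symm)) List.Chain.nil
  | a :: l, u, v, hv, hnd => by
      simp only [List.cons_append, List.chain_cons]
      refine List.IsChain.cons_cons (hR u a ?_) (chain_of_complete hR l a v ?_ hnd.of_cons)
      · intro h; exact (List.nodup_cons.mp hnd).1 (h ▸ List.mem_cons_self (a := a) (l := l))
      · intro h; exact hv (List.mem_cons_of_mem u h)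

lemma exists_cons_cons {l : List V} (h : 2 ≤ l.length) : ∃ u b l'', l = u :: b :: l'' := by
  match l with
  | u :: b :: l'' => exact ⟨u, b, l'', rfl⟩
  | [] => simp at h
  | [x] => simp at h

lemma hamList_of_complete [Fintype V] (G : SimpleGraph V) (hn : 3 ≤ Fintype.card V)
    (hcomp : ∀ u v : V, u ≠ v → G.Adj u v) : ∃ u l, HamList G u l := by
  have hnd : (Finset.univ : Finset V).toList.Nodup := Finset.nodup_toList _
  have hmem : ∀ w, w ∈ (Finset.univ : Finset V).toList := by simp
  have hlen : (Finset.univ : Finset V).toList.length = Fintype.card V := by simp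
  obtain ⟨u, b, l'', hL⟩ := exists_cons_cons (l := (Finset.univ : Finset V).toList) (by omega)
  rw [hL] at hnd hmem hlen
  refine ⟨u, b :: l'', hnd, hmem, by simp at hlen ⊢; omega, ?_⟩
  rw [List.cons_append]
  apply List.chain_cons.mpr
  constructor
  · exact hcomp u b (by rintro rfl; exact (List.nodup_cons.mp hnd).1 List.mem_cons_self)
  · exact chain_of_complete hcomp l'' b u
      (by intro h; exact (List.nodup_cons.mp hnd).1 h) hnd.of_cons

lemma getElemc (l : List V) {i j : ℕ} (h : i = j) (hi : i < l.length) :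
    l[i]'hi = l[j]'(h ▸ hi) := by subst h; rfl

lemma chain_ring_iff {R : V → V → Prop} {u : V} {l : List V} :
    List.Chain R u (l ++ [u]) ↔
      ∀ i (h : i < (u :: l).length),
        R ((u :: l)[i])
          ((u :: l)[(i + 1) % (u :: l).length]'(Nat.mod_lt _ (by simp))) := by
  have hZ : List.Chain R u (l ++ [u]) ↔ List.IsChain R ((u :: l) ++ [u]) := Iff.rfl
  have eL : ∀ (j : ℕ) (h1 : j < (u :: l).length) (h2 : j < ((u :: l) ++ [u]).length),
      ((u :: l) ++ [u])[j]'h2 = (u :: l)[j]'h1 := fun j h1 h2 => List.getElem_append_left h1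
  have eR : ∀ (h2 : (u :: l).length < ((u :: l) ++ [u]).length),
      ((u :: l) ++ [u])[(u :: l).length]'h2 = u := by
    intro h2
    rw [List.getElem_append_right (le_refl _)]
    simp
  have hN : (u :: l).length = l.length + 1 := by simp
  rw [hZ, List.isChain_iff_getElem]
  constructor
  · intro h i hi
    have hi' : i < l.length + 1 := by omega
    have h' := h i (by simp; omega)
    rcases Nat.lt_or_ge (i + 1) (l.length + 1) with hc | hc
    · rw [eL i (by omega), eL (i+1) (by omega)] at h'
      rw [getElemc _ (Nat.mod_eq_of_lt (by omega))]
      exact h'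
    · have hieq : i + 1 = (u :: l).length := by simp; omega
      rw [eL i (by omega), getElemc _ hieq, eR] at h'
      rw [getElemc _ (show (i+1) % (u :: l).length = 0 by rw [hieq]; exact Nat.mod_self _)]
      simpa using h'
  · intro h i hi
    simp only [List.length_append, List.length_cons, List.length_nil,
      List.length_singleton] at hi
    have hi' : i < l.length + 1 := by omega
    have h' := h i (by omega)
    rcases Nat.lt_or_ge (i + 1) (l.length + 1) with hc | hc
    · rw [getElemc _ (Nat.mod_eq_of_lt (by omega))] at h'
      rw [eL i (by omega), eL (i+1) (by omega)]
      exact h'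
    · have hieq : i + 1 = (u :: l).length := by simp; omega
      rw [getElemc _ (show (i+1) % (u :: l).length = 0 by rw [hieq]; exact Nat.mod_self _)] at h'
      rw [eL i (by omega), getElemc _ hieq, eR]
      simpa using h'

lemma getElem_eq_of_eq {l l' : List V} (h : l = l') {i : ℕ} (hi : i < l.length) :
    l[i]'hi = l'[i]'(h ▸ hi) := by subst h; rfl

lemma mod_helper {a N : ℕ} (h1 : N ≤ a) (h2 : a < 2 * N) : a % N = a - N := by
  rw [Nat.mod_eq_sub_mod h1]; exact Nat.mod_eq_of_lt (by omega)

lemma break_lemma [Fintype V] {G : SimpleGraph V} {x y : V}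
    {u : V} {l : List V} (h : HamList (G ⊔ edge x y) u l) :
    HamList G u l ∨
      ∃ (p q : V) (P : List V), ((p = x ∧ q = y) ∨ (p = y ∧ q = x)) ∧
        P.Nodup ∧ (∀ w, w ∈ P) ∧ P.length = (u :: l).length ∧
        (∀ _ : 0 < P.length, P[0] = q) ∧
        (∀ _ : P.length - 1 < P.length, P[P.length - 1] = p) ∧
        (∀ i (hi : i + 1 < P.length), G.Adj P[i] P[i+1]) := by
  classical
  obtain ⟨hnd, hall, hlen, hch⟩ := h
  have hN3 : 3 ≤ (u :: l).length := by simp; omega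
  have hNpos : 0 < (u :: l).length := by omega
  have hC := chain_ring_iff.mp hch
  by_cases hgood : ∀ i (hi : i < (u :: l).length),
      G.Adj ((u :: l)[i]) ((u :: l)[(i+1) % (u :: l).length]'(Nat.mod_lt _ (by simp)))
  · exact Or.inl ⟨hnd, hall, hlen, chain_ring_iff.mpr hgood⟩
  right
  push_neg at hgood
  obtain ⟨i₀, hi₀, hbad⟩ := hgood
  have hadj' := hC i₀ hi₀
  rw [sup_adj] at hadj'
  have hedge := hadj'.resolve_left hbad
  rw [edge_adj] at hedge
  obtain ⟨hcases, hne⟩ := hedge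
  have rotget : ∀ (k j : ℕ) (hj : j < ((u :: l).rotate k).length),
      ((u :: l).rotate k)[j]'hj
        = (u :: l)[(j + k) % (u :: l).length]'(Nat.mod_lt _ hNpos) := by
    intro k j hj
    have := List.get_rotate (u :: l) k ⟨j, hj⟩
    simpa using this
  refine ⟨(u :: l)[i₀], (u :: l)[(i₀+1) % (u :: l).length]'(Nat.mod_lt _ hNpos),
    (u :: l).rotate ((i₀+1) % (u :: l).length), hcases, ?_, ?_, ?_, ?_, ?_, ?_⟩
  · exact List.nodup_rotate.mpr hnd
  · exact fun w => (List.mem_rotate).mpr (hall w)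
  · simp
  · intro h0'
    rw [rotget _ 0 h0']
    exact getElemc _ (by
      rw [Nat.zero_add]
      exact Nat.mod_eq_of_lt (Nat.mod_lt _ hNpos)) _
  · intro hl'
    rw [rotget _ _ hl']
    refine getElemc _ ?_ _
    rcases Nat.lt_or_ge (i₀ + 1) ((u :: l).length) with hc | hc
    · rw [List.length_rotate, Nat.mod_eq_of_lt hc, mod_helper (by omega) (by omega)]
      omega
    · have h1 : i₀ + 1 = (u :: l).length := by omega
      rw [List.length_rotate, h1, Nat.mod_self, Nat.add_zero, Nat.mod_eq_of_lt (by omega)]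
      omega
  · intro j hj
    have hjlen : j + 1 < (u :: l).length := by
      simpa [List.length_rotate] using hj
    rw [rotget _ j (by simpa [List.length_rotate] using (by omega : j < (u :: l).length)),
        rotget _ (j+1) hj]
    have hklt : (i₀ + 1) % (u :: l).length < (u :: l).length := Nat.mod_lt _ hNpos
    have hmlt : (j + (i₀ + 1) % (u :: l).length) % (u :: l).length < (u :: l).length :=
      Nat.mod_lt _ hNpos
    rw [getElemc _ (show (j + 1 + (i₀ + 1) % (u :: l).length) % (u :: l).length
        = ((j + (i₀ + 1) % (u :: l).length) % (u :: l).length + 1) % (u :: l).length by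
      rw [Nat.mod_add_mod]; congr 1; omega) _]
    by_contra hbad2
    have hadj2 := hC _ hmlt
    rw [sup_adj] at hadj2
    have hedge2 := hadj2.resolve_left hbad2
    rw [edge_adj] at hedge2
    obtain ⟨hcases2, hne2⟩ := hedge2
    have key : ((j + (i₀ + 1) % (u :: l).length) % (u :: l).length + 1) % (u :: l).length = i₀
        → (j + (i₀ + 1) % (u :: l).length) % (u :: l).length = (i₀ + 1) % (u :: l).length
        → False := by
      intro hm1 hmk
      rw [hmk] at hm1
      rcases Nat.lt_or_ge (i₀ + 1) ((u :: l).length) with hc | hc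
      · rw [Nat.mod_eq_of_lt hc] at hm1
        rcases Nat.lt_or_ge (i₀ + 2) ((u :: l).length) with hc2 | hc2
        · rw [Nat.mod_eq_of_lt (by omega)] at hm1; omega
        · rw [mod_helper (by omega) (by omega)] at hm1; omega
      · have h1 : i₀ + 1 = (u :: l).length := by omega
        rw [h1, Nat.mod_self, Nat.zero_add, Nat.mod_eq_of_lt (by omega)] at hm1
        omega
    have hm_eq : (j + (i₀ + 1) % (u :: l).length) % (u :: l).length = i₀ := by
      rcases hcases with ⟨ha1, ha2⟩ | ⟨ha1, ha2⟩ <;> rcases hcases2 with ⟨hb1, hb2⟩ | ⟨hb1, hb2⟩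
      · exact (List.Nodup.getElem_inj_iff hnd).mp (hb1.trans ha1.symm)
      · exact (key ((List.Nodup.getElem_inj_iff hnd).mp (hb2.trans ha1.symm))
          ((List.Nodup.getElem_inj_iff hnd).mp (hb1.trans ha2.symm))).elim
      · exact (key ((List.Nodup.getElem_inj_iff hnd).mp (hb2.trans ha1.symm))
          ((List.Nodup.getElem_inj_iff hnd).mp (hb1.trans ha2.symm))).elim
      · exact (List.Nodup.getElem_inj_iff hnd).mp (hb1.trans ha1.symm)
    rcases Nat.lt_or_ge (i₀ + 1) ((u :: l).length) with hc | hc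
    · rw [Nat.mod_eq_of_lt hc] at hm_eq
      rcases Nat.lt_or_ge (j + (i₀ + 1)) ((u :: l).length) with hc2 | hc2
      · rw [Nat.mod_eq_of_lt (by omega)] at hm_eq; omega
      · rw [mod_helper (by omega) (by omega)] at hm_eq; omega
    · have h1 : i₀ + 1 = (u :: l).length := by omega
      rw [h1, Nat.mod_self, Nat.add_zero, Nat.mod_eq_of_lt (by omega)] at hm_eq
      omega

lemma pigeonhole_lemma [Fintype V] {G : SimpleGraph V} {x y : V}
    (hxy : x ≠ y) (hnadj : ¬ G.Adj x y)
    (hσ : Fintype.card V ≤ deg G x + deg G y)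
    {P : List V} (hnd : P.Nodup) (hall : ∀ w, w ∈ P) (hlen : P.length = Fintype.card V)
    (hn : 3 ≤ Fintype.card V)
    (h0 : ∀ _ : 0 < P.length, P[0] = y)
    (hLst : ∀ _ : P.length - 1 < P.length, P[P.length - 1] = x)
    (hch : ∀ i (hi : i + 1 < P.length), G.Adj P[i] P[i+1]) :
    ∃ u' l', HamList G u' l' := by
  classical
  have hN3 : 3 ≤ P.length := by omega
  have hidx : ∀ w, P.idxOf w < P.length := fun w => List.idxOf_lt_length_iff.mpr (hall w)
  have hPy : P[0]'(by omega) = y := h0 (by omega)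
  have hPx : P[P.length - 1]'(by omega) = x := hLst (by omega)
  have hdegy : deg G y = (G.neighborFinset y).card := by
    simp only [deg, neighborFinset_def, Set.toFinset_card, Nat.card_eq_fintype_card]
  have hdegx : deg G x = (G.neighborFinset x).card := by
    simp only [deg, neighborFinset_def, Set.toFinset_card, Nat.card_eq_fintype_card]
  have hidx_pos : ∀ w, G.Adj y w → 1 ≤ P.idxOf w := by
    intro w hw
    rcases Nat.eq_zero_or_pos (P.idxOf w) with hz | hz
    · exfalso
      have hg : P[P.idxOf w]'(hidx w) = w := List.getElem_idxOf (hidx w)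
      rw [getElemc _ hz, hPy] at hg
      exact (G.ne_of_adj hw) hg
    · exact hz
  have hcardA : ((G.neighborFinset y).image (fun w => P.idxOf w - 1)).card = deg G y := by
    rw [hdegy]
    apply Finset.card_image_of_injOn
    intro w1 h1 w2 h2 he
    rw [Finset.mem_coe, mem_neighborFinset] at h1 h2
    have e1 := hidx_pos w1 h1
    have e2 := hidx_pos w2 h2
    have heq : P.idxOf w1 = P.idxOf w2 := by simp only at he; omega
    have g1 : P[P.idxOf w1]'(hidx w1) = w1 := List.getElem_idxOf _
    have g2 : P[P.idxOf w2]'(hidx w2) = w2 := List.getElem_idxOf _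
    rw [← g1, ← g2]
    exact getElemc _ heq _
  have hcardB : ((G.neighborFinset x).image (fun w => P.idxOf w)).card = deg G x := by
    rw [hdegx]
    apply Finset.card_image_of_injOn
    intro w1 h1 w2 h2 he
    have g1 : P[P.idxOf w1]'(hidx w1) = w1 := List.getElem_idxOf _
    have g2 : P[P.idxOf w2]'(hidx w2) = w2 := List.getElem_idxOf _
    rw [← g1, ← g2]
    exact getElemc _ he _
  have hsubA : ((G.neighborFinset y).image (fun w => P.idxOf w - 1))
      ⊆ Finset.range (P.length - 1) := by
    intro i hi
    rw [Finset.mem_image] at hi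
    obtain ⟨w, hw, rfl⟩ := hi
    rw [mem_neighborFinset] at hw
    have h1 := hidx w
    have h2 := hidx_pos w hw
    rw [Finset.mem_range]; omega
  have hsubB : ((G.neighborFinset x).image (fun w => P.idxOf w))
      ⊆ Finset.range (P.length - 1) := by
    intro i hi
    rw [Finset.mem_image] at hi
    obtain ⟨w, hw, rfl⟩ := hi
    rw [mem_neighborFinset] at hw
    have h1 := hidx w
    rw [Finset.mem_range]
    rcases Nat.lt_or_ge (P.idxOf w) (P.length - 1) with h2 | h2
    · exact h2
    · exfalso
      have he : P.idxOf w = P.length - 1 := by omega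
      have g1 : P[P.idxOf w]'h1 = w := List.getElem_idxOf _
      rw [getElemc _ he, hPx] at g1
      exact (G.ne_of_adj hw) g1
  obtain ⟨i, hiAB⟩ : ∃ i, i ∈ ((G.neighborFinset y).image (fun w => P.idxOf w - 1))
      ∩ ((G.neighborFinset x).image (fun w => P.idxOf w)) := by
    have hcup := Finset.card_le_card (Finset.union_subset hsubA hsubB)
    rw [Finset.card_range] at hcup
    have hci := Finset.card_union_add_card_inter
      ((G.neighborFinset y).image (fun w => P.idxOf w - 1))
      ((G.neighborFinset x).image (fun w => P.idxOf w))
    have hpos : 0 < (((G.neighborFinset y).image (fun w => P.idxOf w - 1))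
        ∩ ((G.neighborFinset x).image (fun w => P.idxOf w))).card := by
      rw [hcardA, hcardB] at hci
      omega
    obtain ⟨i, hi⟩ := Finset.card_pos.mp hpos
    exact ⟨i, hi⟩
  have hir : i < P.length - 1 :=
    Finset.mem_range.mp (hsubA (Finset.mem_inter.mp hiAB).1)
  obtain ⟨hiA, hiB⟩ := Finset.mem_inter.mp hiAB
  rw [Finset.mem_image] at hiA hiB
  obtain ⟨wy, hwy, hwyi⟩ := hiA
  obtain ⟨wx, hwx, hwxi⟩ := hiB
  rw [mem_neighborFinset] at hwy hwx
  have hwyI : P.idxOf wy = i + 1 := by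
    have := hidx_pos wy hwy
    omega
  have hPi1 : P[i+1]'(by omega) = wy := by
    have g := List.getElem_idxOf (hidx wy)
    rw [getElemc _ hwyI] at g
    exact g
  have hPi : P[i]'(by omega) = wx := by
    have g := List.getElem_idxOf (hidx wx)
    rw [getElemc _ hwxi] at g
    exact g
  have hpermC : (P.take (i+1) ++ (P.drop (i+1)).reverse).Perm P := by
    have h1 : (P.take (i+1) ++ (P.drop (i+1)).reverse).Perm (P.take (i+1) ++ P.drop (i+1)) :=
      List.Perm.append (List.Perm.refl _) (List.reverse_perm _)
    simpa [List.take_append_drop] using h1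
  have hlenC : (P.take (i+1) ++ (P.drop (i+1)).reverse).length = P.length := hpermC.length_eq
  have htl : (P.take (i+1)).length = i + 1 := by rw [List.length_take]; omega
  have eC1 : ∀ (j : ℕ) (hj : j < i + 1) (hj2 : j < (P.take (i+1) ++ (P.drop (i+1)).reverse).length),
      (P.take (i+1) ++ (P.drop (i+1)).reverse)[j]'hj2 = P[j]'(by omega) := by
    intro j hj hj2
    rw [List.getElem_append_left (show j < (P.take (i+1)).length by rw [htl]; omega)]
    exact List.getElem_take
  have eC2 : ∀ (j : ℕ) (hj1 : i < j) (hj2 : j < P.length)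
      (hj3 : j < (P.take (i+1) ++ (P.drop (i+1)).reverse).length),
      (P.take (i+1) ++ (P.drop (i+1)).reverse)[j]'hj3 = P[P.length + i - j]'(by omega) := by
    intro j hj1 hj2 hj3
    rw [List.getElem_append_right (show (P.take (i+1)).length ≤ j by rw [htl]; omega)]
    rw [List.getElem_reverse, List.getElem_drop]
    refine getElemc _ ?_ _
    simp only [List.length_drop, htl]
    omega
  obtain ⟨c0, c1, cl', hCeq⟩ := exists_cons_cons
    (l := P.take (i+1) ++ (P.drop (i+1)).reverse) (by rw [hlenC]; omega)
  have hlen' : (c0 :: c1 :: cl').length = P.length := by rw [← hCeq]; exact hlenC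
  refine ⟨c0, c1 :: cl', ?_, ?_, ?_, ?_⟩
  · rw [← hCeq]; exact hpermC.nodup_iff.mpr hnd
  · intro w; rw [← hCeq]; exact hpermC.mem_iff.mpr (hall w)
  · have := hlen'
    simp only [List.length_cons] at this ⊢
    omega
  · rw [chain_ring_iff]
    intro j hj
    have hjP : j < P.length := by rw [← hlen']; exact hj
    rw [getElem_eq_of_eq hCeq.symm,
        getElem_eq_of_eq hCeq.symm (i := (j+1) % (c0 :: c1 :: cl').length),
        getElemc _ (show (j+1) % (c0 :: c1 :: cl').length = (j+1) % P.length by rw [hlen'])]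
    rcases Nat.lt_or_ge (j + 1) (i + 1) with hc1 | hc1
    · rw [eC1 j (by omega), getElemc _ (Nat.mod_eq_of_lt (by omega)), eC1 (j+1) (by omega)]
      exact hch j (by omega)
    rcases Nat.eq_or_lt_of_le hc1 with hc2 | hc2
    · -- j = i
      have hji : j = i := by omega
      subst hji
      rw [eC1 j (by omega), getElemc _ (Nat.mod_eq_of_lt (by omega)),
          eC2 (j+1) (by omega) (by omega),
          getElemc _ (show P.length + j - (j+1) = P.length - 1 by omega), hPx,
          show P[j]'(by omega) = wx from hPi]
      exact hwx.symm
    rcases Nat.lt_or_ge (j+1) P.length with hc3 | hc3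
    · -- i < j, j+1 < P.length
      rw [eC2 j (by omega) (by omega), getElemc _ (Nat.mod_eq_of_lt (by omega)),
          eC2 (j+1) (by omega) (by omega)]
      have hx1 := hch (P.length + i - (j+1)) (by omega)
      rw [getElemc _ (show P.length + i - (j+1) + 1 = P.length + i - j by omega)] at hx1
      exact hx1.symm
    · -- j = P.length - 1
      have hjl : j = P.length - 1 := by omega
      rw [eC2 j (by omega) (by omega),
          getElemc _ (show P.length + i - j = i + 1 by omega),
          getElemc _ (show (j+1) % P.length = 0 by rw [show j + 1 = P.length by omega]; exact Nat.mod_self _),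
          eC1 0 (by omega), hPy,
          show P[i+1]'(by omega) = wy from hPi1]
      exact hwy.symm

end OreAux

/-- Ore's theorem. -/
theorem ore {V : Type*} [Fintype V] [DecidableEq V]
    (G : SimpleGraph V) (hn : 3 ≤ Fintype.card V)
    (hσ : ∀ u v : V, u ≠ v → ¬ G.Adj u v → Fintype.card V ≤ deg G u + deg G v) :
    G.IsHamiltonian := by
  classical
  obtain ⟨k, hk⟩ : ∃ k, Gᶜ.edgeSet.ncard ≤ k := ⟨Gᶜ.edgeSet.ncard, le_refl _⟩
  induction k generalizing G with
  | zero =>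
    have hcomp : ∀ u v : V, u ≠ v → G.Adj u v := by
      intro u v huv
      by_contra hadj
      have hm : s(u, v) ∈ Gᶜ.edgeSet := by
        rw [mem_edgeSet, compl_adj]
        exact ⟨huv, hadj⟩
      have := (Set.ncard_pos (Set.toFinite _)).mpr ⟨_, hm⟩
      omega
    obtain ⟨u', l', h⟩ := OreAux.hamList_of_complete G hn hcomp
    exact h.isHamiltonian
  | succ k ih =>
    by_cases hcomp : ∀ u v : V, u ≠ v → G.Adj u v
    · obtain ⟨u', l', h⟩ := OreAux.hamList_of_complete G hn hcomp
      exact h.isHamiltonian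
    push_neg at hcomp
    obtain ⟨xx, yy, hxy, hnadj⟩ := hcomp
    have hle : G ≤ G ⊔ edge xx yy := le_sup_left
    have hdeg : ∀ w, deg G w ≤ deg (G ⊔ edge xx yy) w := by
      intro w
      exact Nat.card_mono (Set.toFinite _) (fun z hz => hle hz)
    have hσ' : ∀ u v : V, u ≠ v → ¬ (G ⊔ edge xx yy).Adj u v →
        Fintype.card V ≤ deg (G ⊔ edge xx yy) u + deg (G ⊔ edge xx yy) v := by
      intro u v huv hnadj'
      have h1 : ¬ G.Adj u v := fun h => hnadj' (hle h)
      exact le_trans (hσ u v huv h1) (add_le_add (hdeg u) (hdeg v))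
    have hkk : (G ⊔ edge xx yy)ᶜ.edgeSet.ncard ≤ k := by
      have hmem : s(xx, yy) ∈ Gᶜ.edgeSet := by
        rw [mem_edgeSet, compl_adj]
        exact ⟨hxy, hnadj⟩
      have hsub : (G ⊔ edge xx yy)ᶜ.edgeSet ⊆ Gᶜ.edgeSet \ {s(xx, yy)} := by
        intro e he
        induction e using Sym2.ind with
        | _ a b =>
          rw [mem_edgeSet, compl_adj] at he
          obtain ⟨hab, hnadj2⟩ := he
          rw [Set.mem_diff]
          constructor
          · rw [mem_edgeSet, compl_adj]
            exact ⟨hab, fun h => hnadj2 (hle h)⟩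
          · intro heq
            rw [Set.mem_singleton_iff] at heq
            apply hnadj2
            rw [sup_adj, edge_adj]
            rw [Sym2.eq_iff] at heq
            exact Or.inr ⟨heq, hab⟩
      have h1 : ((G ⊔ edge xx yy)ᶜ.edgeSet).ncard ≤ (Gᶜ.edgeSet \ {s(xx, yy)}).ncard := by
        rw [← Nat.card_coe_set_eq, ← Nat.card_coe_set_eq]
        exact Nat.card_mono (Set.toFinite _) hsub
      rw [Set.ncard_diff_singleton_of_mem hmem] at h1
      have h2 := (Set.ncard_pos (Set.toFinite _)).mpr ⟨_, hmem⟩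
      omega
    have hham' : (G ⊔ edge xx yy).IsHamiltonian := ih (G ⊔ edge xx yy) hσ' hkk
    obtain ⟨a, c, hcyc⟩ := hham' (by omega)
    obtain ⟨u1, l1, hHL⟩ := OreAux.hamList_of_isHamiltonianCycle hcyc hn
    rcases OreAux.break_lemma hHL with hgood
      | ⟨p, q, P, hpq, hPnd, hPall, hPlen, hP0, hPL, hPch⟩
    · exact hgood.isHamiltonian
    · have hlenP : P.length = Fintype.card V := by
        rw [hPlen]
        have h1 : (u1 :: l1).toFinset = Finset.univ :=
          Finset.eq_univ_iff_forall.mpr (fun w => List.mem_toFinset.mpr (hHL.2.1 w))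
        have h2 := List.toFinset_card_of_nodup hHL.1
        rw [h1, Finset.card_univ] at h2
        omega
      rcases hpq with ⟨rfl, rfl⟩ | ⟨rfl, rfl⟩
      · obtain ⟨u', l', h⟩ := OreAux.pigeonhole_lemma hxy hnadj (hσ _ _ hxy hnadj)
          hPnd hPall hlenP hn hP0 hPL hPch
        exact h.isHamiltonian
      · obtain ⟨u', l', h⟩ := OreAux.pigeonhole_lemma hxy.symm (fun h => hnadj h.symm)
          (by have := hσ _ _ hxy hnadj; omega) hPnd hPall hlenP hn hP0 hPL hPch
        exact h.isHamiltonian
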